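/- Induction step of the parareal error bound: under assumptions (i)–(iii) of the abstract parareal setup, the errors satisfy ‖u(T_n) − U_nᵏ‖_{B_j} ≤ (1 + C_j ΔT)‖u(T_{n−1}) − U_{n−1}ᵏ‖_{B_j} + C_j(ΔT^{p+1} + ε)‖u(T_{n−1}) − U_{n−1}^{k−1}‖_{B_{j+1}}. -/

import Mathlib

/-- Induction step of the parareal error bound, on a scale of norms `nrm j`. -/
theorem parareal_error_induction_step
    {E : Type*} [AddCommGroup E]
    (nrm : ℕ → E → ℝ)
    (hnrm_nonneg : ∀ j x, 0 ≤ nrm j x)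
    (hnrm_tri : ∀ j x y, nrm j (x + y) ≤ nrm j x + nrm j y)
    (hnrm_neg : ∀ j x, nrm j (-x) = nrm j x)
    (φ φb φt : E → E)
    (C : ℕ → ℝ) (hC : ∀ j, 0 < C j)
    (ε ΔT : ℝ) (hε : 0 < ε) (hΔT : 0 < ΔT) (p : ℕ)
    (hLip : ∀ j u v, nrm j (φt u - φt v) ≤ (1 + C j * ΔT) * nrm j (u - v))
    (hEφ : ∀ j u v,
      nrm j ((φ u - φb u) - (φ v - φb v)) ≤ ε * C j * nrm (j + 1) (u - v))
    (hEφt : ∀ j u v,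
      nrm j ((φb u - φt u) - (φb v - φt v)) ≤ C j * ΔT ^ (p + 1) * nrm (j + 1) (u - v))
    (u₀ : E) (u : ℕ → E) (hu0 : u 0 = u₀) (hu : ∀ n, u (n + 1) = φ (u n))
    (U : ℕ → ℕ → E)
    (hU0 : ∀ k, U k 0 = u₀)
    (hUrec : ∀ k n, U (k + 1) (n + 1) =
      φt (U (k + 1) n) + (φ (U k n) - φt (U k n))) :
    ∀ j k n, nrm j (u (n + 1) - U (k + 1) (n + 1)) ≤
      (1 + C j * ΔT) * nrm j (u n - U (k + 1) n) +
        C j * (ΔT ^ (p + 1) + ε) * nrm (j + 1) (u n - U k n) := by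
  intro j k n
  have hd : u (n + 1) - U (k + 1) (n + 1) =
      (φt (u n) - φt (U (k + 1) n)) +
        (((φ (u n) - φb (u n)) - (φ (U k n) - φb (U k n))) +
          ((φb (u n) - φt (u n)) - (φb (U k n) - φt (U k n)))) := by
    rw [hu, hUrec]; abel
  have h1 := hLip j (u n) (U (k + 1) n)
  have h2 := hEφ j (u n) (U k n)
  have h3 := hEφt j (u n) (U k n)
  calc nrm j (u (n + 1) - U (k + 1) (n + 1))
      ≤ nrm j (φt (u n) - φt (U (k + 1) n)) +
          (nrm j ((φ (u n) - φb (u n)) - (φ (U k n) - φb (U k n))) +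
            nrm j ((φb (u n) - φt (u n)) - (φb (U k n) - φt (U k n)))) := by
        rw [hd]
        exact le_trans (hnrm_tri j _ _)
          (add_le_add_right (hnrm_tri j _ _) _)
    _ ≤ (1 + C j * ΔT) * nrm j (u n - U (k + 1) n) +
          C j * (ΔT ^ (p + 1) + ε) * nrm (j + 1) (u n - U k n) := by
        nlinarith [hnrm_nonneg (j + 1) (u n - U k n)]
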